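/- Let r, β > 0 and L1, L2 ∈ ℝ satisfy L2 > L1·e^r > e^{2r} and (L2 − L1·e^r)·e^β > (L1 − e^r)·e^r. Define μ₂ = (e^β − 1)/(L2 − L1·e^r), λ₂ = (L2·e^β − L1·e^r)/(L2 − L1·e^r), and μ₁ = [(e^β − 1)(e^β + λ₂·e^r) − (L1·e^β − e^r)·e^{2r}·μ₂]/((L1 − e^r)·e^β). Then μ₁ > 0 and μ₂ > 0. -/
import Mathlib


open Real

theorem stmt_11 (r β L1 L2 : ℝ) (hr : 0 < r) (hβ : 0 < β)
    (h1 : L2 > L1 * exp r) (h2 : L1 * exp r > exp (2 * r))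
    (h3 : (L2 - L1 * exp r) * exp β > (L1 - exp r) * exp r) :
    0 < ((exp β - 1) * (exp β + ((L2 * exp β - L1 * exp r) / (L2 - L1 * exp r)) * exp r)
          - (L1 * exp β - exp r) * exp (2 * r) * ((exp β - 1) / (L2 - L1 * exp r)))
        / ((L1 - exp r) * exp β) ∧
    0 < (exp β - 1) / (L2 - L1 * exp r) := by
  have hE : 1 < exp β := by have := Real.add_one_le_exp β; linarith
  have hR : 1 < exp r := by have := Real.add_one_le_exp r; linarith
  have hD : 0 < L2 - L1 * exp r := by linarith
  have h2r : exp (2 * r) = exp r * exp r := by rw [two_mul, exp_add]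
  have hL1 : exp r < L1 := by nlinarith [exp_pos r]
  constructor
  · apply div_pos
    · have key : ((exp β - 1) * (exp β + ((L2 * exp β - L1 * exp r) / (L2 - L1 * exp r)) * exp r)
          - (L1 * exp β - exp r) * exp (2 * r) * ((exp β - 1) / (L2 - L1 * exp r)))
        = (exp β - 1) * (exp β * (1 + exp r) * (L2 - L1 * exp r)
            - (exp r)^2 * (L1 - exp r)) / (L2 - L1 * exp r) := by
        rw [h2r]; field_simp; ring
      rw [key]
      apply div_pos _ hD
      have hfac : 0 < exp β * (1 + exp r) * (L2 - L1 * exp r) - (exp r)^2 * (L1 - exp r) := by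
        nlinarith [mul_pos (sub_pos.mpr hL1) (exp_pos r), exp_pos r, sub_pos.mpr hL1]
      nlinarith [hfac]
    · exact mul_pos (by linarith) (exp_pos β)
  · exact div_pos (by linarith) hD
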